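/- There exist a constant C > 0 and a decoder D such that for all integers n ≥ 2, d ≥ 1, h ≥ 1 and every n-vertex finite simple graph G admitting a signed tree model of width at most d whose tree has depth at most h, there is a labeling of the vertices of G by binary strings of length at most C·d·h·log₂ n with which D correctly decides adjacency in G. -/

import Mathlib

/-- `G` has degeneracy at most `d`: every nonempty (induced) subgraph has a vertex of degree
at most `d`. -/
def DegenLE {V : Type*} (G : SimpleGraph V) (d : ℕ) : Prop :=
  ∀ s : Set V, s.Nonempty → ∃ v ∈ s, (G.neighborSet v ∩ s).ncard ≤ d

/-- Full rooted binary trees: every internal node has exactly two children. -/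
inductive BinTree where
  | leaf : BinTree
  | node : BinTree → BinTree → BinTree
deriving DecidableEq

namespace BinTree

/-- The subtree of a binary tree rooted at the node addressed by the path `p` from the root
(`false` = go to the left child, `true` = go to the right child), if it exists. -/
def subtreeAt : BinTree → List Bool → Option BinTree
  | t, [] => some t
  | leaf, _ :: _ => none
  | node l _, false :: p => l.subtreeAt p
  | node _ r, true :: p => r.subtreeAt p

/-- `p` addresses a node of `T`. -/
def IsNode (T : BinTree) (p : List Bool) : Prop := (T.subtreeAt p).isSome

/-- `p` addresses a leaf of `T`. -/
def IsLeafPos (T : BinTree) (p : List Bool) : Prop := T.subtreeAt p = some leaf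

/-- The depth of a binary tree: the maximum number of nodes on a root-to-leaf path. -/
def depth : BinTree → ℕ
  | leaf => 1
  | node l r => max l.depth r.depth + 1

/-- The total number of nodes of a binary tree. -/
def numNodes : BinTree → ℕ
  | leaf => 1
  | node l r => l.numNodes + r.numNodes + 1

/-- The list of (addresses of) leaves of a binary tree, read from left to right. -/
def leaves : BinTree → List (List Bool)
  | leaf => [[]]
  | node l r => l.leaves.map (false :: ·) ++ r.leaves.map (true :: ·)

/-- A binary tree is perfect if all its leaves are at the same depth. -/
def IsPerfect : BinTree → Prop
  | leaf => True
  | node l r => l.IsPerfect ∧ r.IsPerfect ∧ l.depth = r.depth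

/-- A binary tree is complete if all its levels are completely filled, except possibly the
last one, wherein leaves are left-aligned. -/
inductive IsComplete : BinTree → Prop
  | leaf : IsComplete leaf
  | nodeLeft (l r : BinTree) : IsComplete l → r.IsPerfect → l.depth = r.depth + 1 →
      IsComplete (node l r)
  | nodeRight (l r : BinTree) : l.IsPerfect → IsComplete r → l.depth = r.depth →
      IsComplete (node l r)

/-- With the leaves of `T` numbered `1, …, n` from left to right, `T.leafSet x` is the set of
numbers of the leaves of the subtree of `T` rooted at `x`. -/
def leafSet (T : BinTree) (x : List Bool) : Set ℕ :=
  {k | 1 ≤ k ∧ k ≤ T.leaves.length ∧ x <+: T.leaves.getD (k - 1) []}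

end BinTree

/-- Node addresses in a binary tree. -/
abbrev Pos := List Bool

/-- `u` is a strict ancestor of `v` (as tree addresses: a strict prefix). -/
def SAnc (u v : Pos) : Prop := u <+: v ∧ u ≠ v

/-- `{u, v}` is a transversal pair of `T`: both are nodes of `T` and neither is an ancestor
of the other. -/
def Transversal (T : BinTree) (u v : Pos) : Prop :=
  T.IsNode u ∧ T.IsNode v ∧ ¬ u <+: v ∧ ¬ v <+: u

/-- The ancestor relation on unordered pairs: `{u, v} ⪯ {u', v'}`. -/
def PairLE (u v u' v' : Pos) : Prop :=
  (u <+: u' ∧ v <+: v') ∨ (v <+: u' ∧ u <+: v')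

/-- A signed tree model: a full binary rooted tree `T` together with disjoint sets `A`
(transversal anti-edges) and `B` (transversal edges) of transversal pairs of `T`, no two of
which cross. -/
structure STM where
  tree : BinTree
  A : Set (Sym2 Pos)
  B : Set (Sym2 Pos)
  disjAB : Disjoint A B
  transversal : ∀ e ∈ A ∪ B, ∀ u v : Pos, e = s(u, v) → Transversal tree u v
  noCross : ∀ e ∈ A ∪ B, ∀ e' ∈ A ∪ B, ∀ u v u' v' : Pos,
    e = s(u, v) → e' = s(u', v') → ¬ (SAnc u u' ∧ SAnc v' v)

namespace STM

/-- The adjacency relation defined by a signed tree model on the leaves of its tree: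
leaves `u, v` are adjacent iff there is `{u', v'} ∈ B` with `{u', v'} ⪯ {u, v}` and no
`{u'', v''} ∈ A` satisfies `{u', v'} ≺ {u'', v''} ⪯ {u, v}`. -/
def LeafAdj (M : STM) (u v : Pos) : Prop :=
  M.tree.IsLeafPos u ∧ M.tree.IsLeafPos v ∧
  ∃ u' v' : Pos, s(u', v') ∈ M.B ∧ PairLE u' v' u v ∧
    ¬ ∃ u'' v'' : Pos, s(u'', v'') ∈ M.A ∧ PairLE u' v' u'' v'' ∧
      s(u', v') ≠ s(u'', v'') ∧ PairLE u'' v'' u v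

/-- `M` is a signed tree model of the graph `G`: there is a bijection between the vertices of
`G` and the leaves of the tree of `M` under which adjacency in `G` coincides with the
adjacency defined by `M`. -/
def Models {V : Type*} (M : STM) (G : SimpleGraph V) : Prop :=
  ∃ f : V → Pos, Function.Injective f ∧ (∀ v, M.tree.IsLeafPos (f v)) ∧
    (∀ p : Pos, M.tree.IsLeafPos p → ∃ v, f v = p) ∧
    ∀ u v : V, G.Adj u v ↔ M.LeafAdj (f u) (f v)

/-- The auxiliary graph of a signed tree model: vertex set the nodes of the tree, edge set
`A ∪ B`. -/
def auxGraph (M : STM) : SimpleGraph Pos where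
  Adj u v := u ≠ v ∧ s(u, v) ∈ M.A ∪ M.B
  symm := ⟨by
    rintro u v ⟨h1, h2⟩
    exact ⟨h1.symm, by rwa [Sym2.eq_swap]⟩⟩
  loopless := ⟨fun u h => h.1 rfl⟩

/-- The width of a signed tree model is at most `d`: the graph on the nodes of the tree with
edge set `A ∪ B` has degeneracy at most `d`. -/
def WidthLE (M : STM) (d : ℕ) : Prop := DegenLE M.auxGraph d

/-- A signed tree model is clean if every pair of siblings is in `A ∪ B`. -/
def Clean (M : STM) : Prop :=
  ∀ p : Pos, M.tree.IsNode (p ++ [false]) →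
    s(p ++ [false], p ++ [true]) ∈ M.A ∪ M.B

end STM

-- ### Auxiliary machinery for the labeling scheme


abbrev NRec := ℕ × ℕ × ℕ × ℕ × Bool

def natBits : ℕ → List Bool
  | 0 => []
  | (n+1) => (((n+1) % 2) == 1) :: natBits ((n+1) / 2)
decreasing_by exact Nat.div_lt_self (Nat.succ_pos n) one_lt_two

def bitsVal : List Bool → ℕ
  | [] => 0
  | b :: L => (cond b 1 0) + 2 * bitsVal L

lemma bitsVal_natBits : ∀ m, bitsVal (natBits m) = m := by
  intro m
  induction m using Nat.strong_induction_on with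
  | _ m ih =>
    match m with
    | 0 => simp [natBits, bitsVal]
    | (n+1) =>
      rw [natBits, bitsVal, ih ((n+1)/2) (Nat.div_lt_self (Nat.succ_pos n) one_lt_two)]
      rcases Nat.mod_two_eq_zero_or_one (n+1) with h | h <;> simp [h] <;> omega

lemma natBits_injective : Function.Injective natBits := by
  intro a b h
  rw [← bitsVal_natBits a, ← bitsVal_natBits b, h]

lemma natBits_length_le {k m : ℕ} (h : m < 2 ^ k) : (natBits m).length ≤ k := by
  induction k generalizing m with
  | zero => interval_cases m; simp [natBits]
  | succ k ih =>
    match m with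
    | 0 => simp [natBits]
    | (n+1) =>
      rw [natBits, List.length_cons]
      have : (n+1)/2 < 2 ^ k := by
        have := Nat.pow_succ 2 k ▸ h
        omega
      exact Nat.succ_le_succ (ih this)

lemma natBits_length_le_self (m : ℕ) : (natBits m).length ≤ m :=
  le_trans (natBits_length_le (Nat.lt_two_pow_self (n := m))) le_rfl

def encNat (m : ℕ) : List Bool := ((natBits m).flatMap fun b => [true, b]) ++ [false]

lemma flatMap2_length (L : List Bool) : (L.flatMap fun b => [true, b]).length = 2 * L.length := by
  induction L with
  | nil => rfl
  | cons a L ih => simp [List.flatMap_cons, ih]; omega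

lemma encNat_length (m : ℕ) : (encNat m).length = 2 * (natBits m).length + 1 := by
  rw [encNat, List.length_append, flatMap2_length]; rfl

lemma flatMap2_cancel : ∀ (L₁ L₂ s t : List Bool),
    (L₁.flatMap fun b => [true, b]) ++ false :: s = (L₂.flatMap fun b => [true, b]) ++ false :: t →
    L₁ = L₂ ∧ s = t := by
  intro L₁
  induction L₁ with
  | nil =>
    intro L₂ s t h
    cases L₂ with
    | nil => simpa using h
    | cons b L => simp [List.flatMap_cons] at h
  | cons a L ih =>
    intro L₂ s t h
    cases L₂ with
    | nil => simp [List.flatMap_cons] at h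
    | cons b L' =>
      simp only [List.flatMap_cons, List.cons_append, List.append_assoc, List.cons.injEq] at h
      obtain ⟨-, hab, h⟩ := h
      obtain ⟨h1, h2⟩ := ih L' s t (by simpa using h)
      exact ⟨by rw [hab, h1], h2⟩

lemma encNat_cancel {a b : ℕ} {s t : List Bool} (h : encNat a ++ s = encNat b ++ t) :
    a = b ∧ s = t := by
  simp only [encNat, List.append_assoc, List.singleton_append] at h
  obtain ⟨h1, h2⟩ := flatMap2_cancel _ _ _ _ h
  exact ⟨natBits_injective h1, h2⟩

def encRec (r : NRec) : List Bool :=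
  encNat r.1 ++ encNat r.2.1 ++ encNat r.2.2.1 ++ encNat r.2.2.2.1 ++ encNat (cond r.2.2.2.2 1 0)

lemma encRec_cancel {r r' : NRec} {s t : List Bool} (h : encRec r ++ s = encRec r' ++ t) :
    r = r' ∧ s = t := by
  obtain ⟨i, j, a, b, bo⟩ := r
  obtain ⟨i', j', a', b', bo'⟩ := r'
  simp only [encRec, List.append_assoc] at h
  obtain ⟨h1, h⟩ := encNat_cancel h
  obtain ⟨h2, h⟩ := encNat_cancel h
  obtain ⟨h3, h⟩ := encNat_cancel h
  obtain ⟨h4, h⟩ := encNat_cancel h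
  obtain ⟨h5, h6⟩ := encNat_cancel h
  refine ⟨?_, h6⟩
  have hbo : bo = bo' := by cases bo <;> cases bo' <;> simp_all
  simp [h1, h2, h3, h4, hbo]

lemma encRecList_cancel : ∀ (R R' : List NRec), R.length = R'.length →
    R.flatMap encRec = R'.flatMap encRec → R = R' := by
  intro R
  induction R with
  | nil => intro R' hl _; cases R' <;> simp_all
  | cons r R ih =>
    intro R' hl h
    cases R' with
    | nil => simp_all
    | cons r' R'' =>
      simp only [List.flatMap_cons] at h
      obtain ⟨h1, h2⟩ := encRec_cancel h
      simp only [List.length_cons, Nat.add_right_cancel_iff] at hl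
      rw [h1, ih R'' hl h2]

def encData (p : ℕ × List NRec) : List Bool :=
  encNat p.1 ++ encNat p.2.length ++ p.2.flatMap encRec

lemma encData_inj : Function.Injective encData := by
  rintro ⟨k, R⟩ ⟨k', R'⟩ h
  simp only [encData, List.append_assoc] at h
  obtain ⟨h1, h⟩ := encNat_cancel h
  have h' : encNat R.length ++ R.flatMap encRec = encNat R'.length ++ R'.flatMap encRec := h
  obtain ⟨h2, h3⟩ := encNat_cancel h'
  simp [h1, encRecList_cancel R R' h2 h3]

lemma encNat_length_le {m n : ℕ} (hn : 1 ≤ n) (hm : m ≤ 2 * n) :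
    (encNat m).length ≤ 2 * Nat.log 2 n + 5 := by
  have h2 : n < 2 ^ (Nat.log 2 n + 1) := Nat.lt_pow_succ_log_self (by norm_num) n
  have : m < 2 ^ (Nat.log 2 n + 2) := by
    have : 2 ^ (Nat.log 2 n + 2) = 2 * 2 ^ (Nat.log 2 n + 1) := by ring
    omega
  have := natBits_length_le this
  rw [encNat_length]; omega

lemma encNat_length_le_self (m : ℕ) : (encNat m).length ≤ 2 * m + 1 := by
  rw [encNat_length]
  have := natBits_length_le_self m
  omega

-- tree lemmas

namespace BinTree

lemma mem_leaves_iff : ∀ (T : BinTree) (p : Pos), p ∈ T.leaves ↔ T.IsLeafPos p := by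
  intro T
  induction T with
  | leaf =>
    intro p
    cases p with
    | nil => simp [leaves, IsLeafPos, subtreeAt]
    | cons c q => simp [leaves, IsLeafPos, subtreeAt]
  | node l r ihl ihr =>
    intro p
    cases p with
    | nil => simp [leaves, IsLeafPos, subtreeAt]
    | cons c q =>
      cases c
      · simpa [leaves, IsLeafPos, subtreeAt, List.mem_append, List.mem_map] using ihl q
      · simpa [leaves, IsLeafPos, subtreeAt, List.mem_append, List.mem_map] using ihr q

lemma leaves_nodup : ∀ T : BinTree, T.leaves.Nodup := by
  intro T
  induction T with
  | leaf => simp [leaves]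
  | node l r ihl ihr =>
    rw [leaves]
    refine List.Nodup.append ?_ ?_ ?_
    · exact ihl.map (fun a b h => by simpa using h)
    · exact ihr.map (fun a b h => by simpa using h)
    · intro x hx hy
      simp only [List.mem_map] at hx hy
      obtain ⟨a, -, rfl⟩ := hx
      obtain ⟨b, -, h⟩ := hy
      simp at h

lemma leaves_ne_nil : ∀ T : BinTree, T.leaves ≠ [] := by
  intro T
  induction T with
  | leaf => simp [leaves]
  | node l r ihl ihr => simp [leaves]; intro h; exact absurd h ihl

lemma subtreeAt_append : ∀ (T : BinTree) (p q : Pos),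
    T.subtreeAt (p ++ q) = (T.subtreeAt p).bind (fun t => t.subtreeAt q) := by
  intro T p
  induction p generalizing T with
  | nil => intro q; simp [subtreeAt]
  | cons c p ih =>
    intro q
    cases T with
    | leaf => simp [subtreeAt]
    | node l r => cases c <;> simp [subtreeAt, ih]

lemma isNode_of_prefix {T : BinTree} {p q : Pos} (hq : T.IsNode q) (hpq : p <+: q) :
    T.IsNode p := by
  obtain ⟨rest, rfl⟩ := hpq
  rw [IsNode, subtreeAt_append] at hq
  rw [IsNode]
  cases h : T.subtreeAt p with
  | none => rw [h] at hq; simp at hq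
  | some t => simp

lemma isNode_of_isLeafPos {T : BinTree} {p : Pos} (h : T.IsLeafPos p) : T.IsNode p := by
  rw [IsNode, h]; rfl

lemma length_lt_depth : ∀ (T : BinTree) (p : Pos), T.IsNode p → p.length < T.depth := by
  intro T
  induction T with
  | leaf =>
    intro p hp
    cases p with
    | nil => simp [depth]
    | cons c q => simp [IsNode, subtreeAt] at hp
  | node l r ihl ihr =>
    intro p hp
    cases p with
    | nil => simp [depth]
    | cons c q =>
      cases c
      · have := ihl q hp
        simp [depth]; omega
      · have := ihr q hp
        simp [depth]; omega

lemma numNodes_succ : ∀ T : BinTree, T.numNodes + 1 = 2 * T.leaves.length := by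
  intro T
  induction T with
  | leaf => simp [numNodes, leaves]
  | node l r ihl ihr => simp [numNodes, leaves]; omega

lemma depth_le_numNodes : ∀ T : BinTree, T.depth ≤ T.numNodes := by
  intro T
  induction T with
  | leaf => simp [depth, numNodes]
  | node l r ihl ihr =>
    rw [depth, numNodes]
    have h1 : l.depth ≤ l.numNodes + r.numNodes := le_trans ihl (Nat.le_add_right _ _)
    have h2 : r.depth ≤ l.numNodes + r.numNodes := le_trans ihr (Nat.le_add_left _ _)
    omega

lemma nodes_finite (T : BinTree) : {p : Pos | T.IsNode p}.Finite := by
  refine Set.Finite.subset (List.finite_length_le Bool T.depth) ?_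
  intro p hp
  exact le_of_lt (length_lt_depth T p hp)


lemma leaves_getD_left (l r : BinTree) {i : ℕ} (hil : i < l.leaves.length) :
    (node l r).leaves.getD i [] = false :: (l.leaves.getD i []) := by
  have h0 : (node l r).leaves = l.leaves.map (false :: ·) ++ r.leaves.map (true :: ·) := rfl
  have h1 : i < (l.leaves.map (false :: ·)).length := by simpa using hil
  rw [h0, List.getD_append _ _ _ _ h1, List.getD_eq_getElem _ _ h1, List.getElem_map,
    List.getD_eq_getElem _ _ hil]

lemma leaves_getD_right (l r : BinTree) {i : ℕ} (hil : l.leaves.length ≤ i)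
    (hi : i < l.leaves.length + r.leaves.length) :
    (node l r).leaves.getD i [] = true :: (r.leaves.getD (i - l.leaves.length) []) := by
  have h0 : (node l r).leaves = l.leaves.map (false :: ·) ++ r.leaves.map (true :: ·) := rfl
  have h1 : (l.leaves.map (false :: ·)).length ≤ i := by simpa using hil
  have h2 : i - l.leaves.length < r.leaves.length := by omega
  have h3 : i - l.leaves.length < (r.leaves.map (true :: ·)).length := by simpa using h2
  rw [h0, List.getD_append_right _ _ _ _ h1, List.length_map,
    List.getD_eq_getElem _ _ h3, List.getElem_map, List.getD_eq_getElem _ _ h2]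

lemma exists_interval (T : BinTree) (x : Pos) :
    ∃ a b : ℕ, a ≤ b ∧ b ≤ T.leaves.length ∧
      ∀ i, i < T.leaves.length → (x <+: T.leaves.getD i [] ↔ a ≤ i ∧ i < b) := by
  induction T generalizing x with
  | leaf =>
    cases x with
    | nil =>
      refine ⟨0, 1, by omega, by simp [leaves], ?_⟩
      intro i hi
      simp [leaves] at hi ⊢
      omega
    | cons c q =>
      refine ⟨0, 0, le_rfl, by simp [leaves], ?_⟩
      intro i hi
      simp [leaves] at hi
      subst hi
      simp [leaves]
  | node l r ihl ihr =>
    have hlen : (node l r).leaves.length = l.leaves.length + r.leaves.length := by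
      simp [leaves]
    cases x with
    | nil =>
      refine ⟨0, (node l r).leaves.length, by omega, le_rfl, ?_⟩
      intro i hi
      exact ⟨fun _ => ⟨Nat.zero_le _, hi⟩, fun _ => List.nil_prefix⟩
    | cons c q =>
      cases c
      · -- left child
        obtain ⟨a, b, hab, hble, hch⟩ := ihl q
        refine ⟨a, b, hab, by omega, ?_⟩
        intro i hi
        by_cases hil : i < l.leaves.length
        · rw [leaves_getD_left l r hil, List.cons_prefix_cons]
          simpa using hch i hil
        · have hi2 : i < l.leaves.length + r.leaves.length := by omega
          rw [leaves_getD_right l r (by omega) hi2, List.cons_prefix_cons]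
          constructor
          · rintro ⟨h, -⟩; exact absurd h (by simp)
          · rintro ⟨h1, h2⟩; exact absurd h2 (by omega)
      · -- right child
        obtain ⟨a, b, hab, hble, hch⟩ := ihr q
        refine ⟨l.leaves.length + a, l.leaves.length + b, by omega, by omega, ?_⟩
        intro i hi
        by_cases hil : i < l.leaves.length
        · rw [leaves_getD_left l r hil, List.cons_prefix_cons]
          constructor
          · rintro ⟨h, -⟩; exact absurd h (by simp)
          · rintro ⟨h1, h2⟩; exact absurd h1 (by omega)
        · have hi' : i - l.leaves.length < r.leaves.length := by omega
          have hi2 : i < l.leaves.length + r.leaves.length := by omega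
          rw [leaves_getD_right l r (by omega) hi2, List.cons_prefix_cons]
          have := hch (i - l.leaves.length) hi'
          constructor
          · rintro ⟨-, h⟩
            have := this.mp h
            omega
          · rintro ⟨h1, h2⟩
            exact ⟨rfl, this.mpr (by omega)⟩

end BinTree



lemma exists_ord {V : Type*} {G : SimpleGraph V} {d : ℕ} (hG : DegenLE G d) :
    ∀ (N : ℕ) (s : Set V), s.Finite → s.ncard ≤ N →
      ∃ ord : V → ℕ, Set.InjOn ord s ∧
        ∀ v ∈ s, ({w | w ∈ s ∧ G.Adj v w ∧ ord v < ord w}).ncard ≤ d := by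
  classical
  intro N
  induction N with
  | zero =>
    intro s hs hcard
    have : s = ∅ := by
      rw [← Set.ncard_eq_zero hs] at *
      omega
    subst this
    exact ⟨fun _ => 0, fun a ha => absurd ha (by simp), fun v hv => absurd hv (by simp)⟩
  | succ N ih =>
    intro s hs hcard
    rcases Set.eq_empty_or_nonempty s with rfl | hne
    · exact ⟨fun _ => 0, fun a ha => absurd ha (by simp), fun v hv => absurd hv (by simp)⟩
    obtain ⟨v, hv, hvd⟩ := hG s hne
    have hs' : (s \ {v}).Finite := hs.diff
    have hcard' : (s \ {v}).ncard ≤ N := by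
      have h1 : (s \ {v}).ncard = s.ncard - 1 := Set.ncard_diff_singleton_of_mem hv
      have h2 : 1 ≤ s.ncard := (Set.ncard_pos hs).mpr hne
      omega
    obtain ⟨ord', hinj', hdeg'⟩ := ih (s \ {v}) hs' hcard'
    refine ⟨fun w => if w = v then 0 else ord' w + 1, ?_, ?_⟩
    · intro a ha b hb hab
      by_cases h1 : a = v <;> by_cases h2 : b = v
      · rw [h1, h2]
      · subst h1; simp [h2] at hab
      · subst h2; simp [h1] at hab
      · simp [h1, h2] at hab
        exact hinj' ⟨ha, h1⟩ ⟨hb, h2⟩ hab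
    · intro w hw
      by_cases hwv : w = v
      · subst hwv
        refine le_trans (Set.ncard_le_ncard ?_ (hs.inter_of_right (G.neighborSet w))) hvd
        intro x hx
        exact ⟨hx.2.1, hx.1⟩
      · have heq : {x | x ∈ s ∧ G.Adj w x ∧ (if w = v then 0 else ord' w + 1) < (if x = v then 0 else ord' x + 1)}
            = {x | x ∈ s \ {v} ∧ G.Adj w x ∧ ord' w < ord' x} := by
          ext x
          simp only [Set.mem_setOf_eq, Set.mem_diff, Set.mem_singleton_iff]
          constructor
          · rintro ⟨hx1, hx2, hx3⟩
            by_cases hxv : x = v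
            · simp [hxv, hwv] at hx3
            · simp [hxv, hwv] at hx3
              exact ⟨⟨hx1, hxv⟩, hx2, hx3⟩
          · rintro ⟨⟨hx1, hxv⟩, hx2, hx3⟩
            refine ⟨hx1, hx2, by simp [hxv, hwv]; omega⟩
        rw [heq]
        exact hdeg' w ⟨hw, hwv⟩


open Classical in
/-- The decoder's adjacency criterion on a combined list of detected records. -/
noncomputable def critB (L : List (ℕ × ℕ × Bool)) : Bool :=
  decide (∃ e ∈ L, e.2.2 = true ∧ ∀ e' ∈ L, e'.2.2 = false →
    ¬(e.1 ≤ e'.1 ∧ e.2.1 ≤ e'.2.1 ∧ ¬(e.1 = e'.1 ∧ e.2.1 = e'.2.1)))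

/-- Combine two decoded labels into the list of detected records. -/
def combineL (p q : ℕ × List NRec) : List (ℕ × ℕ × Bool) :=
  (p.2.filterMap fun r =>
    if r.2.2.1 ≤ q.1 ∧ q.1 < r.2.2.2.1 then some (r.1, r.2.1, r.2.2.2.2) else none)
  ++ (q.2.filterMap fun r =>
    if r.2.2.1 ≤ p.1 ∧ p.1 < r.2.2.2.1 then some (r.2.1, r.1, r.2.2.2.2) else none)

open Classical in
/-- The decoder. -/
noncomputable def DecD (x y : List Bool) : Bool :=
  if hx : ∃ p : ℕ × List NRec, encData p = x then
    if hy : ∃ q : ℕ × List NRec, encData q = y then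
      critB (combineL hx.choose hy.choose)
    else false
  else false

lemma DecD_encData (p q : ℕ × List NRec) :
    DecD (encData p) (encData q) = critB (combineL p q) := by
  have hx : ∃ p' : ℕ × List NRec, encData p' = encData p := ⟨p, rfl⟩
  have hy : ∃ q' : ℕ × List NRec, encData q' = encData q := ⟨q, rfl⟩
  rw [DecD, dif_pos hx, dif_pos hy, encData_inj hx.choose_spec, encData_inj hy.choose_spec]

lemma STM.auxGraph_adj_iff (M : STM) (x y : Pos) :
    M.auxGraph.Adj x y ↔ x ≠ y ∧ s(x, y) ∈ M.A ∪ M.B := Iff.rfl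


/-- Adjacency labeling scheme of length `O(d · h · log n)` for `n`-vertex graphs admitting a
signed tree model of width at most `d` whose tree has depth at most `h`. -/
theorem stm_adjacency_labeling_scheme :
    ∃ C : ℝ, 0 < C ∧ ∃ D : List Bool → List Bool → Bool,
      ∀ n d h : ℕ, 2 ≤ n → 1 ≤ d → 1 ≤ h → ∀ G : SimpleGraph (Fin n),
        (∃ M : STM, M.Models G ∧ M.WidthLE d ∧ M.tree.depth ≤ h) →
        ∃ ℓ : Fin n → List Bool,
          (∀ v : Fin n, ((ℓ v).length : ℝ) ≤ C * d * h * Real.logb 2 n) ∧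
          ∀ u v : Fin n, u ≠ v → (D (ℓ u) (ℓ v) = true ↔ G.Adj u v) := by
  classical
  refine ⟨100, by norm_num, DecD, ?_⟩
  rintro n d h hn hd hh G ⟨M, ⟨f, hfinj, hfleaf, hfsurj, hadj⟩, hwid, hdep⟩
  have hmemlv : ∀ v : Fin n, f v ∈ M.tree.leaves :=
    fun v => (BinTree.mem_leaves_iff _ _).mpr (hfleaf v)
  have hex : ∀ v : Fin n, ∃ i : ℕ, i < M.tree.leaves.length ∧ M.tree.leaves.getD i [] = f v := by
    intro v
    obtain ⟨i, hi, hgt⟩ := List.getElem_of_mem (hmemlv v)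
    exact ⟨i, hi, by rw [List.getD_eq_getElem _ _ hi, hgt]⟩
  choose idx hidxlt hgetidx using hex
  have hlvlen : M.tree.leaves.length ≤ n := by
    have hsur : ∀ i : Fin M.tree.leaves.length, ∃ w : Fin n, f w = M.tree.leaves.get i := by
      intro i
      exact hfsurj _ ((BinTree.mem_leaves_iff _ _).mp (List.get_mem M.tree.leaves i))
    choose g hg using hsur
    have hginj : Function.Injective g := by
      intro i j hij
      have hgets : M.tree.leaves.get i = M.tree.leaves.get j := by rw [← hg i, ← hg j, hij]
      exact ((BinTree.leaves_nodup M.tree).get_inj_iff).mp hgets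
    simpa using Fintype.card_le_of_injective g hginj
  -- intervals
  choose ia ib hiab hible hichar using fun x => BinTree.exists_interval M.tree x
  -- orientation
  have hnodesfin := BinTree.nodes_finite M.tree
  obtain ⟨ord, hordinj, horddeg⟩ :=
    exists_ord hwid ({p : Pos | M.tree.IsNode p}).ncard _ hnodesfin le_rfl
  -- transversal helpers
  have htrans : ∀ x y : Pos, s(x, y) ∈ M.A ∪ M.B → Transversal M.tree x y :=
    fun x y he => M.transversal _ he x y rfl
  have hside : ∀ (z x y : Pos), s(x, y) ∈ M.A ∪ M.B → x <+: z → y <+: z → False := by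
    intro z x y he hx hy
    obtain ⟨-, -, h1, h2⟩ := htrans x y he
    rcases List.prefix_or_prefix_of_prefix hx hy with hc | hc
    exacts [h1 hc, h2 hc]
  -- out-neighbour lists
  have houtfin : ∀ x : Pos,
      ({y | y ∈ {p : Pos | M.tree.IsNode p} ∧ M.auxGraph.Adj x y ∧ ord x < ord y}).Finite :=
    fun x => hnodesfin.subset (fun y hy => hy.1)
  obtain ⟨outL, houtmem, houtlen⟩ :
      ∃ outL : Pos → List Pos,
        (∀ x y, y ∈ outL x ↔ (M.tree.IsNode y ∧ M.auxGraph.Adj x y ∧ ord x < ord y)) ∧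
        (∀ x, M.tree.IsNode x → (outL x).length ≤ d) := by
    refine ⟨fun x => (houtfin x).toFinset.toList, fun x y => ?_, fun x hx => ?_⟩
    · simp [Set.Finite.mem_toFinset]
    · rw [Finset.length_toList, ← Set.ncard_eq_toFinset_card _ (houtfin x)]
      exact horddeg x hx
  -- record lists
  obtain ⟨Rl, hRmem, hRlen⟩ :
      ∃ Rl : Fin n → List NRec,
        (∀ (u : Fin n) (r : NRec), r ∈ Rl u ↔
          ∃ x y : Pos, x <+: f u ∧ y ∈ outL x ∧
            r = (x.length, y.length, ia y, ib y, decide (s(x, y) ∈ M.B))) ∧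
        (∀ u : Fin n, (Rl u).length ≤ h * d) := by
    refine ⟨fun u => (f u).inits.flatMap fun x => (outL x).map fun y =>
      (x.length, y.length, ia y, ib y, decide (s(x, y) ∈ M.B)), ?_, ?_⟩
    · intro u r
      constructor
      · intro hr
        rw [List.mem_flatMap] at hr
        obtain ⟨x, hx, hr⟩ := hr
        rw [List.mem_map] at hr
        obtain ⟨y, hy, rfl⟩ := hr
        exact ⟨x, y, (List.mem_inits _ _).mp hx, hy, rfl⟩
      · rintro ⟨x, y, hx, hy, rfl⟩
        rw [List.mem_flatMap]
        exact ⟨x, (List.mem_inits _ _).mpr hx, List.mem_map.mpr ⟨y, hy, rfl⟩⟩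
    · intro u
      rw [List.length_flatMap]
      refine le_trans (List.sum_le_card_nsmul _ d ?_) ?_
      · intro m hm
        rw [List.mem_map] at hm
        obtain ⟨x, hx, rfl⟩ := hm
        simp only [Function.comp_apply, List.length_map]
        exact houtlen x (BinTree.isNode_of_prefix (BinTree.isNode_of_isLeafPos (hfleaf u))
          ((List.mem_inits _ _).mp hx))
      · rw [List.length_map, List.length_inits, smul_eq_mul]
        have h1 : (f u).length < M.tree.depth :=
          BinTree.length_lt_depth _ _ (BinTree.isNode_of_isLeafPos (hfleaf u))
        have h2 : (f u).length + 1 ≤ h := by omega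
        exact Nat.mul_le_mul_right d h2
  -- field bounds for records
  have hfieldbound : ∀ (u : Fin n) (r : NRec), r ∈ Rl u →
      r.1 ≤ 2 * n ∧ r.2.1 ≤ 2 * n ∧ r.2.2.1 ≤ 2 * n ∧ r.2.2.2.1 ≤ 2 * n := by
    intro u r hr
    obtain ⟨x, y, hx, hy, rfl⟩ := (hRmem u r).mp hr
    have hxnode : M.tree.IsNode x :=
      BinTree.isNode_of_prefix (BinTree.isNode_of_isLeafPos (hfleaf u)) hx
    have hynode : M.tree.IsNode y := ((houtmem x y).mp hy).1
    have hxl : x.length < M.tree.depth := BinTree.length_lt_depth _ _ hxnode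
    have hyl : y.length < M.tree.depth := BinTree.length_lt_depth _ _ hynode
    have hdn : M.tree.depth ≤ M.tree.numNodes := BinTree.depth_le_numNodes _
    have hnum2 : M.tree.numNodes + 1 = 2 * M.tree.leaves.length := BinTree.numNodes_succ M.tree
    have hia : ia y ≤ M.tree.leaves.length := le_trans (hiab y) (hible y)
    have hib : ib y ≤ M.tree.leaves.length := hible y
    dsimp only
    exact ⟨by omega, by omega, by omega, by omega⟩
  refine ⟨fun u => encData (idx u, Rl u), ?_, ?_⟩
  · -- length bound
    intro v
    have hlen1 : (encNat (idx v)).length ≤ 2 * Nat.log 2 n + 5 :=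
      encNat_length_le (by omega) (by have := hidxlt v; omega)
    have hlen2 : (encNat (Rl v).length).length ≤ 2 * (h * d) + 1 :=
      le_trans (encNat_length_le_self _) (by have := hRlen v; omega)
    have hlen3 : ((Rl v).flatMap encRec).length ≤ (h * d) * (10 * Nat.log 2 n + 25) := by
      rw [List.length_flatMap]
      refine le_trans (List.sum_le_card_nsmul _ (10 * Nat.log 2 n + 25) ?_) ?_
      · intro m hm
        rw [List.mem_map] at hm
        obtain ⟨r, hr, rfl⟩ := hm
        obtain ⟨b1, b2, b3, b4⟩ := hfieldbound v r hr
        have e1 : (encNat r.1).length ≤ 2 * Nat.log 2 n + 5 := encNat_length_le (by omega) b1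
        have e2 : (encNat r.2.1).length ≤ 2 * Nat.log 2 n + 5 := encNat_length_le (by omega) b2
        have e3 : (encNat r.2.2.1).length ≤ 2 * Nat.log 2 n + 5 := encNat_length_le (by omega) b3
        have e4 : (encNat r.2.2.2.1).length ≤ 2 * Nat.log 2 n + 5 := encNat_length_le (by omega) b4
        have e5 : (encNat (cond r.2.2.2.2 1 0)).length ≤ 2 * Nat.log 2 n + 5 :=
          encNat_length_le (by omega) (by cases r.2.2.2.2 <;> simp <;> omega)
        simp only [Function.comp_apply, encRec, List.length_append]
        omega
      · rw [List.length_map, smul_eq_mul]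
        exact Nat.mul_le_mul_right _ (hRlen v)
    have htot : (encData (idx v, Rl v)).length ≤
        (2 * Nat.log 2 n + 5) + (2 * (h * d) + 1) + (h * d) * (10 * Nat.log 2 n + 25) := by
      simp only [encData, List.length_append]
      omega
    have hL : (Nat.log 2 n : ℝ) ≤ Real.logb 2 n := Real.natLog_le_logb n 2
    have h1 : (1 : ℝ) ≤ Real.logb 2 n := by
      rw [show (1 : ℝ) = Real.logb 2 2 from (Real.logb_self_eq_one (by norm_num)).symm]
      exact Real.logb_le_logb_of_le (by norm_num) (by norm_num) (by exact_mod_cast hn)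
    have hd1 : (1 : ℝ) ≤ (d : ℝ) := by exact_mod_cast hd
    have hh1 : (1 : ℝ) ≤ (h : ℝ) := by exact_mod_cast hh
    have hL0 : (0 : ℝ) ≤ (Nat.log 2 n : ℝ) := by positivity
    have hcast : ((encData (idx v, Rl v)).length : ℝ) ≤
        (2 * (Nat.log 2 n : ℝ) + 5) + (2 * ((h : ℝ) * d) + 1) +
          ((h : ℝ) * d) * (10 * (Nat.log 2 n : ℝ) + 25) := by
      exact_mod_cast htot
    have hdh1 : (1 : ℝ) ≤ (h : ℝ) * d := by nlinarith
    have hstep : ((h : ℝ) * d) * (10 * (Nat.log 2 n : ℝ) + 25) ≤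
        ((h : ℝ) * d) * (35 * Real.logb 2 n) := by
      have : 10 * (Nat.log 2 n : ℝ) + 25 ≤ 35 * Real.logb 2 n := by nlinarith
      nlinarith
    calc ((encData (idx v, Rl v)).length : ℝ)
        ≤ (2 * (Nat.log 2 n : ℝ) + 5) + (2 * ((h : ℝ) * d) + 1) +
            ((h : ℝ) * d) * (10 * (Nat.log 2 n : ℝ) + 25) := hcast
      _ ≤ 100 * d * h * Real.logb 2 n := by nlinarith
  · -- decoder correctness
    intro u v huv
    rw [DecD_encData, hadj u v]
    rw [critB, decide_eq_true_eq]
    have hfufv : f u ≠ f v := fun e => huv (hfinj e)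
    -- characterization of combined records
    have hmemC : ∀ z : ℕ × ℕ × Bool,
        z ∈ combineL (idx u, Rl u) (idx v, Rl v) ↔
        ∃ x y : Pos, s(x, y) ∈ M.A ∪ M.B ∧ x <+: f u ∧ y <+: f v ∧
          z = (x.length, y.length, decide (s(x, y) ∈ M.B)) := by
      intro z
      rw [combineL, List.mem_append, List.mem_filterMap, List.mem_filterMap]
      constructor
      · rintro (⟨r, hr, hz⟩ | ⟨r, hr, hz⟩)
        · obtain ⟨x, y, hx, hy, rfl⟩ := (hRmem u r).mp hr
          by_cases ht : ia y ≤ idx v ∧ idx v < ib y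
          · rw [if_pos ht] at hz
            have hz' := Option.some.inj hz
            have hyv : y <+: f v := by
              have hch := hichar y (idx v) (hidxlt v)
              rw [hgetidx v] at hch
              exact hch.mpr ht
            have hadj' : M.auxGraph.Adj x y := ((houtmem x y).mp hy).2.1
            exact ⟨x, y, ((M.auxGraph_adj_iff x y).mp hadj').2, hx, hyv, hz'.symm⟩
          · rw [if_neg ht] at hz
            exact absurd hz (by simp)
        · obtain ⟨x, y, hx, hy, rfl⟩ := (hRmem v r).mp hr
          by_cases ht : ia y ≤ idx u ∧ idx u < ib y
          · rw [if_pos ht] at hz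
            have hz' := Option.some.inj hz
            have hyu : y <+: f u := by
              have hch := hichar y (idx u) (hidxlt u)
              rw [hgetidx u] at hch
              exact hch.mpr ht
            have hadj' : M.auxGraph.Adj x y := ((houtmem x y).mp hy).2.1
            refine ⟨y, x, ?_, hyu, hx, ?_⟩
            · rw [Sym2.eq_swap]
              exact ((M.auxGraph_adj_iff x y).mp hadj').2
            · rw [← hz']
              have : (s(y, x) ∈ M.B) = (s(x, y) ∈ M.B) := by rw [Sym2.eq_swap]
              simp [this]
          · rw [if_neg ht] at hz
            exact absurd hz (by simp)
      · rintro ⟨x, y, hxy, hx, hy, rfl⟩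
        have hT := htrans x y hxy
        have hxnode : M.tree.IsNode x := hT.1
        have hynode : M.tree.IsNode y := hT.2.1
        have hne : x ≠ y := fun e => hT.2.2.1 (by rw [e])
        have hAdj : M.auxGraph.Adj x y := (M.auxGraph_adj_iff x y).mpr ⟨hne, hxy⟩
        have hordne : ord x ≠ ord y := fun e => hne (hordinj hxnode hynode e)
        rcases Nat.lt_or_ge (ord x) (ord y) with hlt | hge
        · left
          refine ⟨(x.length, y.length, ia y, ib y, decide (s(x, y) ∈ M.B)),
            (hRmem u _).mpr ⟨x, y, hx, (houtmem x y).mpr ⟨hynode, hAdj, hlt⟩, rfl⟩, ?_⟩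
          have ht : ia y ≤ idx v ∧ idx v < ib y := by
            have hch := hichar y (idx v) (hidxlt v)
            rw [hgetidx v] at hch
            exact hch.mp hy
          rw [if_pos ht]
        · have hlt : ord y < ord x := by omega
          right
          refine ⟨(y.length, x.length, ia x, ib x, decide (s(y, x) ∈ M.B)),
            (hRmem v _).mpr ⟨y, x, hy, (houtmem y x).mpr ⟨hxnode, hAdj.symm, hlt⟩, rfl⟩, ?_⟩
          have ht : ia x ≤ idx u ∧ idx u < ib x := by
            have hch := hichar x (idx u) (hidxlt u)
            rw [hgetidx u] at hch
            exact hch.mp hx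
          rw [if_pos ht]
          have : (s(y, x) ∈ M.B) = (s(x, y) ∈ M.B) := by rw [Sym2.eq_swap]
          simp [this]
    -- the equivalence
    constructor
    · -- criterion implies adjacency
      rintro ⟨e, heC, het, hall⟩
      obtain ⟨x, y, hxy, hx, hy, rfl⟩ := (hmemC e).mp heC
      have hB : s(x, y) ∈ M.B := of_decide_eq_true het
      refine ⟨hfleaf u, hfleaf v, x, y, hB, Or.inl ⟨hx, hy⟩, ?_⟩
      rintro ⟨x'', y'', hA, hle1, hne, hle2⟩
      rcases hle2 with ⟨h1, h2⟩ | ⟨h1, h2⟩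
      · rcases hle1 with ⟨p1, p2⟩ | ⟨p1, p2⟩
        · have hA' : s(x'', y'') ∈ M.A ∪ M.B := Or.inl hA
          have he'C := (hmemC (x''.length, y''.length, decide (s(x'', y'') ∈ M.B))).mpr
            ⟨x'', y'', hA', h1, h2, rfl⟩
          have hfalse : decide (s(x'', y'') ∈ M.B) = false :=
            decide_eq_false (Set.disjoint_left.mp M.disjAB hA)
          refine hall _ he'C hfalse ⟨p1.length_le, p2.length_le, ?_⟩
          rintro ⟨e1, e2⟩
          exact hne (by rw [p1.eq_of_length e1, p2.eq_of_length e2])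
        · exact hside (f u) x y hxy hx (p1.trans h1)
      · rcases hle1 with ⟨p1, p2⟩ | ⟨p1, p2⟩
        · exact hside (f v) x y hxy (p1.trans h2) hy
        · have hAsw : s(y'', x'') ∈ M.A := by rw [Sym2.eq_swap]; exact hA
          have hA' : s(y'', x'') ∈ M.A ∪ M.B := Or.inl hAsw
          have he'C := (hmemC (y''.length, x''.length, decide (s(y'', x'') ∈ M.B))).mpr
            ⟨y'', x'', hA', h1, h2, rfl⟩
          have hfalse : decide (s(y'', x'') ∈ M.B) = false :=
            decide_eq_false (Set.disjoint_left.mp M.disjAB hAsw)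
          refine hall _ he'C hfalse ⟨p2.length_le, p1.length_le, ?_⟩
          rintro ⟨e1, e2⟩
          refine hne ?_
          rw [p2.eq_of_length e1, p1.eq_of_length e2]
          exact Sym2.eq_swap
    · -- adjacency implies criterion
      rintro ⟨-, -, u', v', hB, hle, hno⟩
      have key : ∀ x y : Pos, s(x, y) ∈ M.B → x <+: f u → y <+: f v →
          (∀ x' y' : Pos, s(x', y') ∈ M.A → x <+: x' → y <+: y' →
            x' <+: f u → y' <+: f v → s(x, y) = s(x', y')) →
          ∃ e ∈ combineL (idx u, Rl u)
              (idx v, Rl v),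
            e.2.2 = true ∧ ∀ e' ∈ combineL (idx u, Rl u)
              (idx v, Rl v), e'.2.2 = false →
              ¬(e.1 ≤ e'.1 ∧ e.2.1 ≤ e'.2.1 ∧ ¬(e.1 = e'.1 ∧ e.2.1 = e'.2.1)) := by
        intro x y hxB hx hy hmax
        refine ⟨(x.length, y.length, decide (s(x, y) ∈ M.B)),
          (hmemC _).mpr ⟨x, y, Or.inr hxB, hx, hy, rfl⟩, decide_eq_true hxB, ?_⟩
        intro e' he' hf
        obtain ⟨x', y', hxy', hx', hy', rfl⟩ := (hmemC e').mp he'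
        have hA' : s(x', y') ∈ M.A := by
          rcases hxy' with hA' | hB'
          · exact hA'
          · rw [decide_eq_true hB'] at hf
            exact absurd hf (by simp)
        rintro ⟨l1, l2, -⟩
        have hpx : x <+: x' := List.prefix_of_prefix_length_le hx hx' l1
        have hpy : y <+: y' := List.prefix_of_prefix_length_le hy hy' l2
        have heq := hmax x' y' hA' hpx hpy hx' hy'
        exact (Set.disjoint_left.mp M.disjAB hA') (heq ▸ hxB)
      rcases hle with ⟨h1, h2⟩ | ⟨h1, h2⟩
      · refine key u' v' hB h1 h2 ?_
        intro x' y' hA' hpx hpy hx' hy'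
        by_contra hne
        exact hno ⟨x', y', hA', Or.inl ⟨hpx, hpy⟩, hne, Or.inl ⟨hx', hy'⟩⟩
      · have hBsw : s(v', u') ∈ M.B := by rw [Sym2.eq_swap]; exact hB
        refine key v' u' hBsw h1 h2 ?_
        intro x' y' hA' hpx hpy hx' hy'
        by_contra hne
        refine hno ⟨x', y', hA', Or.inr ⟨hpx, hpy⟩, ?_, Or.inl ⟨hx', hy'⟩⟩
        intro heq
        exact hne (by rw [← heq, Sym2.eq_swap])
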